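/- arXiv:2202.00188 — 2 statements merged into one kernel-verified Lean document; each statement's English description precedes it below -/
import Mathlib

section
/- If g is a computably transparent and inflationary partial multifunction on ℕ, then id ⊔ g ≤_m g and pWeih(g) ≤_m g; consequently, for all partial multifunctions f,g on ℕ with g computably transparent and inflationary, f ≤_m g if and only if pWeih(f) ≤_m g (i.e., pWeih is left adjoint to the inclusion of the computably transparent, inflationary partial multifunctions into all partial multifunctions, both preordered by ≤_m). -/
namespace KleeneOracle

/-- `e ∗ x`: application of the `e`-th partial computable function on ℕ. -/
def ap (e x : ℕ) : Part ℕ :=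
  Nat.Partrec.Code.eval (Denumerable.ofNat Nat.Partrec.Code e) x

/-- `e ∗ A := {e ∗ a : a ∈ A}`. -/
def apSet (e : ℕ) (A : Set ℕ) : Set ℕ := {z | ∃ a ∈ A, z ∈ ap e a}

/-- A partial multifunction on ℕ. -/
abbrev Multifun := ℕ → Part (Set ℕ)

def Transparent (U : Multifun) : Prop :=
  ∃ u : ℕ, ∀ (e x : ℕ) (A : Set ℕ), A ∈ U x → (∀ y ∈ A, (ap e y).Dom) →
    ∃ c ∈ ap u e, ∃ d ∈ ap c x, ∃ B ∈ U d, B ⊆ apSet e A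

def Inflationary (U : Multifun) : Prop :=
  ∃ η : ℕ, ∀ x : ℕ, ∃ c ∈ ap η x, ∃ B ∈ U c, B ⊆ {x}

def mcomp (g f : Multifun) : Multifun := fun x =>
  ⟨∃ A ∈ f x, ∀ y ∈ A, (g y).Dom,
   fun _ => {z | ∃ A ∈ f x, ∃ y ∈ A, ∃ B ∈ g y, z ∈ B}⟩

def Idempotent (U : Multifun) : Prop :=
  ∃ μ : ℕ, ∀ (x : ℕ) (A : Set ℕ), A ∈ mcomp U U x →
    ∃ c ∈ ap μ x, ∃ B ∈ U c, B ⊆ A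

def mRed (f g : Multifun) : Prop :=
  ∃ e : ℕ, ∀ (x : ℕ) (A : Set ℕ), A ∈ f x →
    ∃ c ∈ ap e x, ∃ B ∈ g c, B ⊆ A

def wRed (f g : Multifun) : Prop :=
  ∃ em ep : ℕ, ∀ (x : ℕ) (A : Set ℕ), A ∈ f x →
    ∃ c ∈ ap em x, ∃ B ∈ g c, ∀ y ∈ B, ∃ z ∈ ap ep (Nat.pair x y), z ∈ A

def Weih (g : Multifun) : Multifun := fun w =>
  ⟨∃ c ∈ ap w.unpair.1 w.unpair.2.unpair.2, ∃ B ∈ g c,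
     ∀ y ∈ B, (ap w.unpair.2.unpair.1 (Nat.pair w.unpair.2.unpair.2 y)).Dom,
   fun _ => {z | ∃ c ∈ ap w.unpair.1 w.unpair.2.unpair.2, ∃ B ∈ g c,
     ∃ y ∈ B, z ∈ ap w.unpair.2.unpair.1 (Nat.pair w.unpair.2.unpair.2 y)}⟩

def idsq (g : Multifun) : Multifun := fun w =>
  if w.unpair.1 = 0 then Part.some {w.unpair.2}
  else if w.unpair.1 = 1 then g w.unpair.2
  else Part.none

def pWeih (g : Multifun) : Multifun := Weih (idsq g)

def pwRed (f g : Multifun) : Prop := wRed f (idsq g)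

def Med (Q : Set ℕ) : Multifun := fun e =>
  ⟨∀ a ∈ Q, (ap e a).Dom, fun _ => apSet e Q⟩

def MedRed (P Q : Set ℕ) : Prop :=
  ∃ e : ℕ, (∀ a ∈ Q, (ap e a).Dom) ∧ apSet e Q ⊆ P

def constMF (P : Set ℕ) : Multifun := fun _ => Part.some P

def imp (p q : Set ℕ) : Set ℕ := {e | ∀ x ∈ p, ∃ z ∈ ap e x, z ∈ q}

def OpMonotone (j : Set ℕ → Set ℕ) : Prop :=
  ∃ u : ℕ, ∀ p q : Set ℕ, ∀ a ∈ imp p q, ∃ c ∈ ap u a, c ∈ imp (j p) (j q)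

def OpInflationary (j : Set ℕ → Set ℕ) : Prop :=
  ∃ e : ℕ, ∀ p : Set ℕ, e ∈ imp p (j p)

def OpIdempotent (j : Set ℕ → Set ℕ) : Prop :=
  ∃ e : ℕ, ∀ p : Set ℕ, e ∈ imp (j (j p)) (j p)

def LawvereTierney (j : Set ℕ → Set ℕ) : Prop :=
  OpMonotone j ∧ OpInflationary j ∧ OpIdempotent j

def jU (U : Multifun) (p : Set ℕ) : Set ℕ := {x | ∃ A ∈ U x, A ⊆ p}

def SingleValued (U : Multifun) : Prop := ∀ x : ℕ, ∀ A ∈ U x, ∃ y : ℕ, A = {y}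

def presInter (j : Set ℕ → Set ℕ) : Prop :=
  ∀ (ι : Type) [Nonempty ι] (p : ι → Set ℕ), j (⋂ i, p i) = ⋂ i, j (p i)

def presUnion (j : Set ℕ → Set ℕ) : Prop :=
  ∀ (ι : Type) (p : ι → Set ℕ), j (⋃ i, p i) = ⋃ i, j (p i)

def Uop (j : Set ℕ → Set ℕ) : Multifun := fun x =>
  ⟨∃ p : Set ℕ, x ∈ j p, fun _ => ⋂₀ {p : Set ℕ | x ∈ j p}⟩

def mMorphism (e : ℕ) (f g : Multifun) : Prop :=
  ∀ (x : ℕ) (A : Set ℕ), A ∈ f x → ∃ c ∈ ap e x, ∃ B ∈ g c, B ⊆ A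

def rMorphism (e : ℕ) (j k : Set ℕ → Set ℕ) : Prop :=
  ∀ p : Set ℕ, e ∈ imp (j p) (k p)

def rRed (j k : Set ℕ → Set ℕ) : Prop := ∃ e : ℕ, rMorphism e j k


/-! ### auxiliary computability lemmas -/

theorem ap_partrec : Partrec₂ ap :=
  Nat.Partrec.Code.eval_part.comp ((Computable.ofNat _).comp Computable.fst) Computable.snd

theorem apP {α} [Primcodable α] {g h : α → ℕ} (hg : Computable g) (hh : Computable h) :
    Partrec fun a => ap (g a) (h a) := ap_partrec.comp hg hh

theorem exists_ap (ψ : ℕ →. ℕ) (h : Partrec ψ) : ∃ e, ∀ x, ap e x = ψ x := by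
  obtain ⟨c, hc⟩ := Nat.Partrec.Code.exists_code.1 (Partrec.nat_iff.1 h)
  exact ⟨Encodable.encode c, fun x => by simp [ap, hc]⟩

theorem exists_ap2 (ψ : ℕ →. ℕ) (h : Partrec ψ) :
    ∃ ce : ℕ → ℕ, Computable ce ∧ ∀ n x, ap (ce n) x = ψ (Nat.pair n x) := by
  obtain ⟨c, hc⟩ := Nat.Partrec.Code.exists_code.1 (Partrec.nat_iff.1 h)
  refine ⟨fun n => Encodable.encode (Nat.Partrec.Code.curry c n), ?_, fun n x => ?_⟩
  · exact Computable.encode.comp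
      ((Nat.Partrec.Code.primrec₂_curry.comp (Primrec.const c) Primrec.id).to_comp)
  · simp [ap, Nat.Partrec.Code.eval_curry, hc]

theorem mem_mk {p : Prop} {S : Set ℕ} {A : Set ℕ} :
    A ∈ (⟨p, fun _ => S⟩ : Part (Set ℕ)) ↔ p ∧ S = A :=
  ⟨fun ⟨h, e⟩ => ⟨h, e⟩, fun ⟨h, e⟩ => ⟨h, e⟩⟩

theorem mRed_trans {f g h : Multifun} (h1 : mRed f g) (h2 : mRed g h) : mRed f h := by
  obtain ⟨e1, he1⟩ := h1
  obtain ⟨e2, he2⟩ := h2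
  obtain ⟨e, he⟩ := exists_ap (fun x => (ap e1 x).bind (ap e2))
    ((apP (Computable.const e1) Computable.id).bind
      (apP (Computable.const e2) Computable.snd))
  refine ⟨e, fun x A hA => ?_⟩
  obtain ⟨c, hc, B, hB, hBA⟩ := he1 x A hA
  obtain ⟨c', hc', B', hB', hB'B⟩ := he2 c B hB
  exact ⟨c', by rw [he]; exact Part.mem_bind_iff.2 ⟨c, hc, hc'⟩, B', hB', hB'B.trans hBA⟩

theorem mRed_pWeih (f : Multifun) : mRed f (pWeih f) := by
  obtain ⟨h0, hh0⟩ := exists_ap (fun x => Part.some (Nat.pair 1 x))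
    ((Primrec₂.natPair.comp (Primrec.const 1) Primrec.id).to_comp.partrec)
  obtain ⟨k0, hk0⟩ := exists_ap (fun n => Part.some n.unpair.2)
    ((Primrec.snd.comp Primrec.unpair).to_comp.partrec)
  obtain ⟨e, he⟩ := exists_ap (fun x => Part.some (Nat.pair h0 (Nat.pair k0 x)))
    ((Primrec₂.natPair.comp (Primrec.const h0)
      (Primrec₂.natPair.comp (Primrec.const k0) Primrec.id)).to_comp.partrec)
  refine ⟨e, fun x A hA => ?_⟩
  refine ⟨Nat.pair h0 (Nat.pair k0 x), by rw [he]; exact Part.mem_some _, A, ?_, le_refl A⟩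
  rw [pWeih, Weih, mem_mk]
  constructor
  · refine ⟨Nat.pair 1 x, by simp [hh0], A, by simp [idsq, hA], fun y hy => by simp [hk0]⟩
  · ext z
    simp only [Set.mem_setOf_eq, Nat.unpair_pair]
    constructor
    · rintro ⟨c, hc, B, hB, y, hy, hz⟩
      rw [hh0, Part.mem_some_iff] at hc
      subst hc
      simp only [idsq, Nat.unpair_pair] at hB
      rw [hk0] at hz
      simp only [Nat.unpair_pair, Part.mem_some_iff] at hz
      subst hz
      exact (Part.mem_unique hB hA) ▸ hy
    · intro hz
      exact ⟨Nat.pair 1 x, by simp [hh0], A, by simp [idsq, hA], z, hz, by simp [hk0]⟩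

theorem cu1 : Computable fun n : ℕ => n.unpair.1 :=
  (Primrec.fst.comp Primrec.unpair).to_comp

theorem cu2 : Computable fun n : ℕ => n.unpair.2 :=
  (Primrec.snd.comp Primrec.unpair).to_comp

theorem pWeih_mono {f g : Multifun} (hfg : mRed f g) : mRed (pWeih f) (pWeih g) := by
  obtain ⟨r, hr⟩ := hfg
  obtain ⟨ce, hce, hceap⟩ := exists_ap2
    (fun p => (ap p.unpair.1 p.unpair.2).bind fun c =>
      cond (decide (c.unpair.1 = 1)) ((ap r c.unpair.2).map (Nat.pair 1)) (Part.some c))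
    (Partrec.bind (apP cu1 cu2)
      (Partrec.cond
        ((Primrec.eq.comp (Primrec.fst.comp (Primrec.unpair.comp Primrec.snd))
          (Primrec.const 1)).decide.to_comp)
        ((apP (Computable.const r) (cu2.comp Computable.snd)).map
          ((Primrec₂.natPair.comp (Primrec.const 1) Primrec.snd).to_comp))
        Computable.snd.partrec))
  obtain ⟨t, ht⟩ := exists_ap (fun w => Part.some (Nat.pair (ce w.unpair.1) w.unpair.2))
    (Primrec₂.natPair.to_comp.comp (hce.comp cu1) cu2).partrec
  have hce' : ∀ h x : ℕ, ap (ce h) x = (ap h x).bind fun c =>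
      cond (decide (c.unpair.1 = 1)) ((ap r c.unpair.2).map (Nat.pair 1)) (Part.some c) := by
    intro h x; rw [hceap]; simp
  refine ⟨t, fun w A hA => ?_⟩
  rw [pWeih, Weih, mem_mk] at hA
  obtain ⟨⟨c, hc, B, hB, hdom⟩, rfl⟩ := hA
  set h := w.unpair.1 with hh
  set k := w.unpair.2.unpair.1 with hk
  set x := w.unpair.2.unpair.2 with hx
  have hw' : Nat.pair (ce h) w.unpair.2 ∈ ap t w := by rw [ht]; exact Part.mem_some _
  by_cases h1 : c.unpair.1 = 1
  · have hBf : B ∈ f c.unpair.2 := by simpa [idsq, h1] using hB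
    obtain ⟨d, hd, Bg, hBg, hsub⟩ := hr c.unpair.2 B hBf
    have hcd : Nat.pair 1 d ∈ ap (ce h) x := by
      rw [hce']
      refine Part.mem_bind_iff.2 ⟨c, hc, ?_⟩
      have hb : (decide (c.unpair.1 = 1)) = true := by simp [h1]
      rw [hb, cond_true]
      exact Part.mem_map_iff _ |>.2 ⟨d, hd, rfl⟩
    have hmem : {z | ∃ c' ∈ ap (ce h) x, ∃ B' ∈ idsq g c', ∃ y ∈ B',
        z ∈ ap k (Nat.pair x y)} ∈ pWeih g (Nat.pair (ce h) w.unpair.2) := by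
      rw [pWeih, Weih, mem_mk]
      constructor
      · exact ⟨Nat.pair 1 d, by simpa using hcd, Bg, by simpa [idsq] using hBg,
          fun y hy => by simpa using hdom y (hsub hy)⟩
      · simp only [Nat.unpair_pair]; rfl
    refine ⟨Nat.pair (ce h) w.unpair.2, hw', _, hmem, ?_⟩
    · rintro z hz
      simp only [Set.mem_setOf_eq] at hz ⊢
      obtain ⟨c', hc', B', hB', y, hy, hz⟩ := hz
      have : c' = Nat.pair 1 d := Part.mem_unique hc' hcd
      subst this
      simp only [idsq, Nat.unpair_pair] at hB'
      have : B' = Bg := Part.mem_unique hB' hBg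
      subst this
      exact ⟨c, hc, B, hB, y, hsub hy, hz⟩
  · by_cases h0 : c.unpair.1 = 0
    · have hBs : B = {c.unpair.2} := by simpa [idsq, h0] using hB
      have hcd : c ∈ ap (ce h) x := by
        rw [hce']
        refine Part.mem_bind_iff.2 ⟨c, hc, ?_⟩
        have hb : (decide (c.unpair.1 = 1)) = false := by simp [h1]
        rw [hb, cond_false]
        exact Part.mem_some _
      have hmem : {z | ∃ c' ∈ ap (ce h) x, ∃ B' ∈ idsq g c', ∃ y ∈ B',
          z ∈ ap k (Nat.pair x y)} ∈ pWeih g (Nat.pair (ce h) w.unpair.2) := by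
        rw [pWeih, Weih, mem_mk]
        constructor
        · exact ⟨c, by simpa using hcd, {c.unpair.2}, by simp [idsq, h0],
            fun y hy => by simpa using hdom y (hBs ▸ hy)⟩
        · simp only [Nat.unpair_pair]; rfl
      refine ⟨Nat.pair (ce h) w.unpair.2, hw', _, hmem, ?_⟩
      · rintro z hz
        simp only [Set.mem_setOf_eq] at hz ⊢
        obtain ⟨c', hc', B', hB', y, hy, hz⟩ := hz
        rw [show c' = c from Part.mem_unique hc' hcd] at hB'
        have : B' = {c.unpair.2} := by simpa [idsq, h0] using hB'
        subst this
        exact ⟨c, hc, B, hB, y, hBs ▸ hy, hz⟩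
    · exfalso; simpa [idsq, h0, h1] using hB

theorem idsq_red (g : Multifun) (hI : Inflationary g) : mRed (idsq g) g := by
  obtain ⟨η, hη⟩ := hI
  obtain ⟨e, he⟩ := exists_ap
    (fun w => cond (decide (w.unpair.1 = 0)) (ap η w.unpair.2) (Part.some w.unpair.2))
    (Partrec.cond ((Primrec.eq.comp (Primrec.fst.comp Primrec.unpair)
        (Primrec.const 0)).decide.to_comp)
      (apP (Computable.const η) cu2) cu2.partrec)
  refine ⟨e, fun w A hA => ?_⟩
  by_cases h0 : w.unpair.1 = 0
  · have hAs : A = {w.unpair.2} := by simpa [idsq, h0] using hA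
    obtain ⟨c, hc, B, hB, hsub⟩ := hη w.unpair.2
    exact ⟨c, by rw [he]; simpa [h0] using hc, B, hB, hAs ▸ hsub⟩
  · by_cases h1 : w.unpair.1 = 1
    · have hAg : A ∈ g w.unpair.2 := by simpa [idsq, h0, h1] using hA
      exact ⟨w.unpair.2, by rw [he]; simp [h0], A, hAg, le_refl A⟩
    · exfalso; simpa [idsq, h0, h1] using hA

theorem pWeih_red (g : Multifun) (hT : Transparent g) (hI : Inflationary g) :
    mRed (pWeih g) g := by
  obtain ⟨u, hu⟩ := hT
  obtain ⟨η, hη⟩ := hI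
  -- ce1 : index-of-(fun y => ap k (pair x y)) from (pair k x)
  obtain ⟨ce1, hce1c, hce1⟩ := exists_ap2
    (fun q => ap q.unpair.1.unpair.1 (Nat.pair q.unpair.1.unpair.2 q.unpair.2))
    (apP (cu1.comp cu1) (Primrec₂.natPair.to_comp.comp (cu2.comp cu1) cu2))
  have hce1' : ∀ k x y : ℕ, ap (ce1 (Nat.pair k x)) y = ap k (Nat.pair x y) := by
    intro k x y; rw [hce1]; simp
  obtain ⟨e, he⟩ := exists_ap
    (fun w => (ap w.unpair.1 w.unpair.2.unpair.2).bind fun c =>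
      cond (decide (c.unpair.1 = 0))
        ((ap w.unpair.2.unpair.1 (Nat.pair w.unpair.2.unpair.2 c.unpair.2)).bind (ap η))
        ((ap u (ce1 (Nat.pair w.unpair.2.unpair.1 w.unpair.2.unpair.2))).bind
          (fun c' => ap c' c.unpair.2)))
    (Partrec.bind (apP cu1 (cu2.comp cu2))
      (Partrec.cond
        ((Primrec.eq.comp (Primrec.fst.comp (Primrec.unpair.comp Primrec.snd))
          (Primrec.const 0)).decide.to_comp)
        (Partrec.bind
          (apP ((cu1.comp cu2).comp Computable.fst)
            (Primrec₂.natPair.to_comp.comp ((cu2.comp cu2).comp Computable.fst)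
              (cu2.comp Computable.snd)))
          (apP (Computable.const η) Computable.snd))
        (Partrec.bind
          (apP (Computable.const u)
            (hce1c.comp (Primrec₂.natPair.to_comp.comp ((cu1.comp cu2).comp Computable.fst)
              ((cu2.comp cu2).comp Computable.fst))))
          (apP Computable.snd ((cu2.comp Computable.snd).comp Computable.fst)))))
  refine ⟨e, fun w A hA => ?_⟩
  rw [pWeih, Weih, mem_mk] at hA
  obtain ⟨⟨c, hc, B, hB, hdom⟩, rfl⟩ := hA
  set h := w.unpair.1 with hh
  set k := w.unpair.2.unpair.1 with hk
  set x := w.unpair.2.unpair.2 with hx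
  by_cases h0 : c.unpair.1 = 0
  · have hBs : B = {c.unpair.2} := by simpa [idsq, h0] using hB
    have hzdom : (ap k (Nat.pair x c.unpair.2)).Dom := hdom c.unpair.2 (by rw [hBs]; rfl)
    set z0 := (ap k (Nat.pair x c.unpair.2)).get hzdom with hz0
    have hz0m : z0 ∈ ap k (Nat.pair x c.unpair.2) := Part.get_mem hzdom
    obtain ⟨d, hd, B', hB', hsub⟩ := hη z0
    refine ⟨d, ?_, B', hB', ?_⟩
    · rw [he]
      refine Part.mem_bind_iff.2 ⟨c, hc, ?_⟩
      have hb : (decide (c.unpair.1 = 0)) = true := by simp [h0]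
      rw [hb, cond_true]
      exact Part.mem_bind_iff.2 ⟨z0, hz0m, hd⟩
    · refine hsub.trans ?_
      rintro z hz
      rw [Set.mem_singleton_iff] at hz
      subst hz
      exact ⟨c, hc, {c.unpair.2}, hBs ▸ hB, c.unpair.2, rfl, hz0m⟩
  · by_cases h1 : c.unpair.1 = 1
    · have hBg : B ∈ g c.unpair.2 := by simpa [idsq, h0, h1] using hB
      obtain ⟨c', hc', d, hd, B', hB', hsub⟩ := hu (ce1 (Nat.pair k x)) c.unpair.2 B hBg
        (fun y hy => by rw [hce1']; exact hdom y hy)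
      refine ⟨d, ?_, B', hB', ?_⟩
      · rw [he]
        refine Part.mem_bind_iff.2 ⟨c, hc, ?_⟩
        have hb : (decide (c.unpair.1 = 0)) = false := by simp [h0]
        rw [hb, cond_false]
        exact Part.mem_bind_iff.2 ⟨c', hc', hd⟩
      · refine hsub.trans ?_
        rintro z ⟨y, hy, hz⟩
        rw [hce1'] at hz
        exact ⟨c, hc, B, hB, y, hy, hz⟩
    · exfalso; simpa [idsq, h0, h1] using hB


/-- If `g` is computably transparent and inflationary then
`id ⊔ g ≤_m g` and `pWeih g ≤_m g`; consequently, for all `f g` with `g` computably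
transparent and inflationary, `f ≤_m g ↔ pWeih f ≤_m g`. -/
theorem pweih_left_adjoint :
    (∀ g : Multifun, Transparent g → Inflationary g →
      mRed (idsq g) g ∧ mRed (pWeih g) g) ∧
    (∀ f g : Multifun, Transparent g → Inflationary g →
      (mRed f g ↔ mRed (pWeih f) g)) := by
  constructor
  · exact fun g hT hI => ⟨idsq_red g hI, pWeih_red g hT hI⟩
  · intro f g hT hI
    exact ⟨fun hfg => mRed_trans (pWeih_mono hfg) (pWeih_red g hT hI),
           fun h => mRed_trans (mRed_pWeih f) h⟩


end KleeneOracle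
end

section
/- For every Q ⊆ ℕ, the partial multifunction Med_Q is computably transparent; and for every P ⊆ ℕ, the total constant multifunction c_P (with c_P(x) = P for every x ∈ ℕ) satisfies c_P ≤_m Med_Q if and only if P ≤_M Q. -/
namespace KleeneOracle

open Nat.Partrec (Code)
open Nat.Partrec.Code

lemma mem_med {Q : Set ℕ} {x : ℕ} {A : Set ℕ} :
    A ∈ Med Q x ↔ (∀ a ∈ Q, (ap x a).Dom) ∧ A = apSet x Q := by
  constructor
  · rintro ⟨h, rfl⟩; exact ⟨h, rfl⟩
  · rintro ⟨h, rfl⟩; exact ⟨h, rfl⟩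

lemma ap_encode (c : Code) (x : ℕ) : ap (Encodable.encode c) x = c.eval x := by
  simp [ap]

/-- For every `Q ⊆ ℕ`, `Med Q` is computably transparent, and for every
`P ⊆ ℕ` the total constant multifunction `c_P` satisfies `c_P ≤_m Med Q ↔ P ≤_M Q`. -/
theorem med_transparent_and_medvedev (Q : Set ℕ) :
    Transparent (Med Q) ∧
    ∀ P : Set ℕ, (mRed (constMF P) (Med Q) ↔ MedRed P Q) := by
  constructor
  · -- transparency
    -- f (pair e x) = encode (comp (ofNat e) (ofNat x))
    have hf : Primrec (fun n : ℕ =>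
        Encodable.encode ((Denumerable.ofNat Code n.unpair.1).comp
          (Denumerable.ofNat Code n.unpair.2))) := by
      have := primrec₂_comp.comp
        ((Primrec.ofNat Code).comp (Primrec.fst.comp Primrec.unpair))
        ((Primrec.ofNat Code).comp (Primrec.snd.comp Primrec.unpair))
      exact Primrec.encode.comp this
    obtain ⟨cf, hcf⟩ := exists_code.1 hf.to_comp.partrec
    -- u-function: e ↦ encode (curry cf e)
    have hg : Primrec (fun e : ℕ => Encodable.encode (curry cf e)) :=
      Primrec.encode.comp (primrec₂_curry.comp (Primrec.const cf) Primrec.id)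
    obtain ⟨cu, hcu⟩ := exists_code.1 hg.to_comp.partrec
    refine ⟨Encodable.encode cu, ?_⟩
    intro e x A hA hdom
    obtain ⟨hxdom, rfl⟩ := mem_med.1 hA
    refine ⟨Encodable.encode (curry cf e), ?_, ?_⟩
    · rw [ap_encode, hcu]; simp
    · set d : ℕ := Encodable.encode ((Denumerable.ofNat Code e).comp
        (Denumerable.ofNat Code x)) with hd
      refine ⟨d, ?_, apSet d Q, ?_, ?_⟩
      · rw [ap_encode, eval_curry, hcf]
        simp [hd]
      · have hapd : ∀ a : ℕ, ap d a =
            (Denumerable.ofNat Code x).eval a >>= (Denumerable.ofNat Code e).eval := by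
          intro a; rw [hd, ap_encode]; rfl
        refine mem_med.2 ⟨?_, rfl⟩
        intro a ha
        have h1 : ((Denumerable.ofNat Code x).eval a).Dom := hxdom a ha
        obtain ⟨y, hy⟩ := Part.dom_iff_mem.1 h1
        have hyA : y ∈ apSet x Q := ⟨a, ha, hy⟩
        obtain ⟨z, hz⟩ := Part.dom_iff_mem.1 (hdom y hyA)
        rw [hapd a]
        exact Part.dom_iff_mem.2 ⟨z, Part.mem_bind_iff.2 ⟨y, hy, hz⟩⟩
      · rintro z ⟨a, ha, hz⟩
        have hapd : ap d a =
            (Denumerable.ofNat Code x).eval a >>= (Denumerable.ofNat Code e).eval := by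
          rw [hd, ap_encode]; rfl
        rw [hapd] at hz
        obtain ⟨y, hy, hz⟩ := Part.mem_bind_iff.1 hz
        exact ⟨y, ⟨a, ha, hy⟩, hz⟩
  · intro P
    constructor
    · rintro ⟨e, he⟩
      obtain ⟨c, _, B, hB, hBP⟩ := he 0 P (Part.mem_some P)
      obtain ⟨hdom, rfl⟩ := mem_med.1 hB
      exact ⟨c, hdom, hBP⟩
    · rintro ⟨m, hmdom, hmP⟩
      refine ⟨Encodable.encode (Code.const m), fun x A hA => ?_⟩
      have hA' : A = P := Part.mem_some_iff.1 hA
      refine ⟨m, ?_, apSet m Q, mem_med.2 ⟨hmdom, rfl⟩, hA' ▸ hmP⟩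
      rw [ap_encode, eval_const]; simp


end KleeneOracle
end
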